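/- Each of the eight points s1=(0:0:0:1), s2=(1:0:0:1), s3=(0:0:1:0), s4=(1:0:1:0), s5=(0:1:0:0), s6=(0:1:0:1), s7=(1:-1:1:0), s8=(1:0:0:0) lies on the quartic surface Z7 and is a singular point of it. -/
import Mathlib


open MvPolynomial

/-- The defining quartic of the surface `Z₇` in `ℙ³`. -/
noncomputable def Z7 : MvPolynomial (Fin 4) ℂ :=
  X 0 ^ 2 * X 1 ^ 2 + X 0 ^ 2 * X 1 * X 2 - X 0 * X 1 ^ 2 * X 2 - X 0 * X 1 * X 2 ^ 2
    - X 0 ^ 2 * X 1 * X 3 - X 0 * X 1 ^ 2 * X 3 + X 0 * X 1 * X 2 * X 3 - X 1 * X 2 ^ 2 * X 3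
    + X 0 * X 1 * X 3 ^ 2 + X 2 ^ 2 * X 3 ^ 2

/-- The eight singular points `s₁, …, s₈` of `Z₇`. -/
def Z7sing : Fin 8 → Fin 4 → ℂ :=
  ![![0, 0, 0, 1], ![1, 0, 0, 1], ![0, 0, 1, 0], ![1, 0, 1, 0],
    ![0, 1, 0, 0], ![0, 1, 0, 1], ![1, -1, 1, 0], ![1, 0, 0, 0]]

set_option maxHeartbeats 1000000 in
/-- Each of the eight points `s₁, …, s₈` lies on the quartic surface `Z₇` and is a singular
point of it: the quartic and all four of its partial derivatives vanish there. -/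
theorem Z7_eight_singular_points :
    ∀ j : Fin 8, eval (Z7sing j) Z7 = 0 ∧ ∀ i : Fin 4, eval (Z7sing j) (pderiv i Z7) = 0 := by
  have h0 : Z7sing 0 = ![0,0,0,1] := rfl
  have h1 : Z7sing 1 = ![1,0,0,1] := rfl
  have h2 : Z7sing 2 = ![0,0,1,0] := rfl
  have h3 : Z7sing 3 = ![1,0,1,0] := rfl
  have h4 : Z7sing 4 = ![0,1,0,0] := rfl
  have h5 : Z7sing 5 = ![0,1,0,1] := rfl
  have h6 : Z7sing 6 = ![1,-1,1,0] := rfl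
  have h7 : Z7sing 7 = ![1,0,0,0] := rfl
  intro j
  refine ⟨?_, fun i => ?_⟩ <;> fin_cases j <;> try fin_cases i
  all_goals
    simp [Z7, pderiv_mul, pderiv_pow, pderiv_X, Matrix.cons_val_zero, Matrix.cons_val_one,
      Matrix.head_cons, Matrix.cons_val_two, Matrix.cons_val_three, Matrix.tail_cons]
  all_goals
    norm_num [h0, h1, h2, h3, h4, h5, h6, h7, Matrix.cons_val_zero, Matrix.cons_val_one,
      Matrix.head_cons, Matrix.cons_val_two, Matrix.cons_val_three, Matrix.tail_cons]
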